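/- Let G be an abelian group such that no proper quotient of G is divisible (G is strongly non-divisible). Then every quotient of G is residually finite; in particular G¹ = 0. -/

import Mathlib

/-- The subgroup mG = {m•x : x ∈ G} of an abelian group G. -/
def nsmulRange (G : Type*) [AddCommGroup G] (m : ℕ) : AddSubgroup G :=
  (m • AddMonoidHom.id G).range

/-- The first Ulm subgroup G¹ = ⋂_{m ≥ 1} mG. -/
def ulm (G : Type*) [AddCommGroup G] : AddSubgroup G :=
  ⨅ m ∈ Set.Ioi (0 : ℕ), nsmulRange G m

lemma mem_nsmulRange {G : Type*} [AddCommGroup G] {m : ℕ} {y : G} :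
    y ∈ nsmulRange G m ↔ ∃ x : G, m • x = y := by
  simp [nsmulRange, AddMonoidHom.mem_range]

lemma nat_mul_zsmul {C : Type*} [AddCommGroup C] (n : ℕ) (k : ℤ) (a : C) :
    n • (k • a) = ((n : ℤ) * k) • a := by
  rw [mul_smul, natCast_zsmul]

lemma finOrder_of_zsmul {C : Type*} [AddCommGroup C] {a : C} {j : ℤ} (hj : j ≠ 0)
    (h : j • a = 0) : IsOfFinAddOrder a := by
  refine isOfFinAddOrder_iff_nsmul_eq_zero.mpr ⟨j.natAbs, Int.natAbs_pos.mpr hj, ?_⟩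
  have h' : ((j.natAbs : ℤ)) • a = 0 := by
    rcases Int.natAbs_eq j with he | he
    · rw [← he, h]
    · have : (j.natAbs : ℤ) = -j := by omega
      rw [this, neg_smul, h, neg_zero]
  rw [← natCast_zsmul]; exact h'

/-- A cocyclic abelian group which is not divisible is finite. -/
lemma finite_of_cocyclic {C : Type*} [AddCommGroup C] (c : C) (hc : c ≠ 0)
    (hcog : ∀ N : AddSubgroup C, N ≠ ⊥ → c ∈ N)
    {m : ℕ} (hm : 0 < m) (hnd : nsmulRange C m ≠ ⊤) :
    Finite C := by
  have hcz : ∀ a : C, a ≠ 0 → ∃ k : ℤ, k • a = c := by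
    intro a ha
    have h1 : AddSubgroup.zmultiples a ≠ ⊥ := by
      simpa [AddSubgroup.zmultiples_eq_bot] using ha
    exact AddSubgroup.mem_zmultiples_iff.mp (hcog _ h1)
  -- c has finite order
  have hcfin : IsOfFinAddOrder c := by
    by_contra h0
    have h2 : (2 : ℕ) • c ≠ 0 := fun hcc =>
      h0 (isOfFinAddOrder_iff_nsmul_eq_zero.mpr ⟨2, by norm_num, hcc⟩)
    obtain ⟨k, hk⟩ := hcz _ h2
    rw [← natCast_zsmul, ← mul_smul] at hk
    have h3 : (k * ((2 : ℕ) : ℤ) - 1) • c = 0 := by rw [sub_smul, hk, one_smul, sub_self]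
    exact h0 (finOrder_of_zsmul (by push_cast; omega) h3)
  have hn0 : 0 < addOrderOf c := hcfin.addOrderOf_pos
  have hn1 : addOrderOf c ≠ 1 := by simpa [AddMonoid.addOrderOf_eq_one_iff] using hc
  set p := (addOrderOf c).minFac with hpdef
  have hpp : p.Prime := Nat.minFac_prime hn1
  -- p • c = 0
  have hc0ne : (addOrderOf c / p) • c ≠ 0 := by
    intro h0
    have hdvd := addOrderOf_dvd_iff_nsmul_eq_zero.mpr h0
    have h1 : 0 < addOrderOf c / p := Nat.div_pos ((addOrderOf c).minFac_le hn0) hpp.pos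
    have h2 : addOrderOf c / p < addOrderOf c := Nat.div_lt_self hn0 hpp.one_lt
    exact absurd (Nat.le_of_dvd h1 hdvd) (by omega)
  have hpc0 : p • ((addOrderOf c / p) • c) = 0 := by
    rw [smul_smul, Nat.mul_div_cancel' (addOrderOf c).minFac_dvd]
    exact addOrderOf_nsmul_eq_zero c
  have hpc : p • c = 0 := by
    obtain ⟨k, hk⟩ := hcz _ hc0ne
    rw [← hk, ← natCast_zsmul, ← mul_smul, mul_comm, mul_smul, natCast_zsmul, hpc0, smul_zero]
  have hordc : addOrderOf c = p := by
    rcases hpp.eq_one_or_self_of_dvd (addOrderOf c) (addOrderOf_dvd_iff_nsmul_eq_zero.mpr hpc)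
      with h1 | h1
    · exact absurd h1 hn1
    · exact h1
  -- every nonzero element has finite order
  have hfin : ∀ z : C, z ≠ 0 → IsOfFinAddOrder z := by
    intro z hz
    by_contra h0
    have hpz : p • z ≠ 0 := fun hzz =>
      h0 (isOfFinAddOrder_iff_nsmul_eq_zero.mpr ⟨p, hpp.pos, hzz⟩)
    obtain ⟨k, hk⟩ := hcz _ hpz
    have hk0 : k ≠ 0 := by rintro rfl; rw [zero_smul] at hk; exact hc hk.symm
    have hzz : ((p : ℤ)) • z = p • z := natCast_zsmul z p
    have h1 : ((p : ℤ) * (k * (p : ℤ))) • z = 0 := by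
      rw [mul_smul, mul_smul, hzz, hk, natCast_zsmul, hpc]
    have h2 : (p : ℤ) * (k * (p : ℤ)) ≠ 0 := by
      have : (p : ℤ) ≠ 0 := by exact_mod_cast hpp.pos.ne'
      exact mul_ne_zero this (mul_ne_zero hk0 this)
    exact h0 (finOrder_of_zsmul h2 h1)
  -- every prime dividing the order of a nonzero element is p
  have hprime : ∀ z : C, z ≠ 0 → ∀ q : ℕ, q.Prime → q ∣ addOrderOf z → q = p := by
    intro z hz q hq hdvd
    have hnz : 0 < addOrderOf z := (hfin z hz).addOrderOf_pos
    have hz0ne : (addOrderOf z / q) • z ≠ 0 := by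
      intro h0
      have hdvd2 := addOrderOf_dvd_iff_nsmul_eq_zero.mpr h0
      have h1 : 0 < addOrderOf z / q := Nat.div_pos (Nat.le_of_dvd hnz hdvd) hq.pos
      have h2 : addOrderOf z / q < addOrderOf z := Nat.div_lt_self hnz hq.one_lt
      exact absurd (Nat.le_of_dvd h1 hdvd2) (by omega)
    have hqz0 : q • ((addOrderOf z / q) • z) = 0 := by
      rw [smul_smul, Nat.mul_div_cancel' hdvd]
      exact addOrderOf_nsmul_eq_zero z
    obtain ⟨k, hk⟩ := hcz _ hz0ne
    have hqc : q • c = 0 := by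
      rw [← hk, ← natCast_zsmul, ← mul_smul, mul_comm, mul_smul, natCast_zsmul, hqz0, smul_zero]
    have : p ∣ q := hordc ▸ addOrderOf_dvd_iff_nsmul_eq_zero.mpr hqc
    exact ((Nat.prime_dvd_prime_iff_eq hpp hq).mp this).symm
  -- every element is killed by a power of p
  have hpow : ∀ z : C, ∃ e : ℕ, p ^ e • z = 0 := by
    intro z
    rcases eq_or_ne z 0 with rfl | hz
    · exact ⟨0, smul_zero _⟩
    have h0 : addOrderOf z ≠ 0 := (hfin z hz).addOrderOf_pos.ne'
    have hu : addOrderOf z / p ^ ((addOrderOf z).factorization p) = 1 := by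
      by_contra hu1
      have hq := Nat.minFac_prime hu1
      have hud : (addOrderOf z / p ^ ((addOrderOf z).factorization p)) ∣ addOrderOf z :=
        Nat.ordCompl_dvd (addOrderOf z) p
      have heq := hprime z hz _ hq ((Nat.minFac_dvd _).trans hud)
      have hd := Nat.minFac_dvd (addOrderOf z / p ^ ((addOrderOf z).factorization p))
      rw [heq] at hd
      exact (Nat.not_dvd_ordCompl hpp h0) hd
    refine ⟨(addOrderOf z).factorization p, ?_⟩
    have heq : p ^ ((addOrderOf z).factorization p) = addOrderOf z := by
      have h1 := Nat.ordProj_mul_ordCompl_eq_self (addOrderOf z) p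
      rw [hu, mul_one] at h1
      exact h1
    rw [heq]; exact addOrderOf_nsmul_eq_zero z
  -- the p-multiples are a proper subgroup
  have hpC : ∃ y : C, y ∉ nsmulRange C p := by
    by_contra hall
    push_neg at hall
    apply hnd
    rw [AddSubgroup.eq_top_iff']
    intro z
    have hdiv : ∀ e : ℕ, ∀ w : C, ∃ v, p ^ e • v = w := by
      intro e
      induction e with
      | zero => exact fun w => ⟨w, by rw [pow_zero, one_smul]⟩
      | succ e ih =>
        intro w
        obtain ⟨v, hv⟩ := mem_nsmulRange.mp (hall w)
        obtain ⟨v', hv'⟩ := ih v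
        exact ⟨v', by rw [pow_succ', mul_smul, hv', hv]⟩
    rcases eq_or_ne z 0 with rfl | hz
    · exact mem_nsmulRange.mpr ⟨0, smul_zero m⟩
    have hcop : Nat.Coprime (m / p ^ (m.factorization p)) (addOrderOf z) := by
      rw [Nat.coprime_iff_gcd_eq_one]
      by_contra hg
      have hq := Nat.minFac_prime hg
      have h1 := (Nat.minFac_dvd _).trans (Nat.gcd_dvd_left (m / p ^ (m.factorization p))
        (addOrderOf z))
      have h2 := (Nat.minFac_dvd _).trans (Nat.gcd_dvd_right (m / p ^ (m.factorization p))
        (addOrderOf z))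
      have heq := hprime z hz _ hq h2
      rw [heq] at h1
      exact Nat.not_dvd_ordCompl hpp hm.ne' h1
    obtain ⟨a, b, hab⟩ := hcop.isCoprime
    have hz1 : (m / p ^ (m.factorization p)) • (a • z) = z := by
      have h2 : ((addOrderOf z : ℤ)) • z = 0 := by
        rw [natCast_zsmul]; exact addOrderOf_nsmul_eq_zero z
      calc (m / p ^ (m.factorization p)) • (a • z)
          = ((m / p ^ (m.factorization p) : ℕ) : ℤ) • (a • z) := (natCast_zsmul _ _).symm
        _ = (a * (m / p ^ (m.factorization p) : ℕ)) • z := by rw [← mul_smul, mul_comm]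
        _ = (a * (m / p ^ (m.factorization p) : ℕ) + b * (addOrderOf z)) • z := by
            have h3 : (b * ((addOrderOf z : ℕ) : ℤ)) • z = 0 := by
              rw [mul_smul, h2, smul_zero]
            rw [add_smul, h3, add_zero]
        _ = z := by rw [hab, one_smul]
    obtain ⟨v, hv⟩ := hdiv (m.factorization p) (a • z)
    refine mem_nsmulRange.mpr ⟨v, ?_⟩
    rw [← Nat.ordProj_mul_ordCompl_eq_self m p, mul_comm, mul_smul, hv, hz1]
  obtain ⟨y, hy⟩ := hpC
  have hy0 : y ≠ 0 := fun h0 => hy (h0 ▸ mem_nsmulRange.mpr ⟨0, smul_zero p⟩)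
  obtain ⟨i, hi⟩ := hcz y hy0
  -- elements killed by p are multiples of y
  have hCp : ∀ w : C, p • w = 0 → ∃ j : ℤ, j • y = w := by
    intro w hw
    rcases eq_or_ne w 0 with rfl | hw0
    · exact ⟨0, zero_smul _ _⟩
    obtain ⟨j, hj⟩ := hcz w hw0
    have hpj : ¬ (p : ℤ) ∣ j := by
      rintro ⟨j', rfl⟩
      apply hc
      rw [← hj, mul_comm, mul_smul, natCast_zsmul, hw, smul_zero]
    have hcop : IsCoprime (p : ℤ) j := by
      rw [Int.isCoprime_iff_gcd_eq_one]
      have hgd : Int.gcd (p : ℤ) j ∣ p := by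
        have h4 := @Int.gcd_dvd_left (p : ℤ) j
        exact_mod_cast h4
      rcases hpp.eq_one_or_self_of_dvd _ hgd with h1 | h1
      · exact h1
      · exfalso
        apply hpj
        have h4 := @Int.gcd_dvd_right (p : ℤ) j
        rwa [h1] at h4
    obtain ⟨a, b, hab⟩ := hcop
    refine ⟨b * i, ?_⟩
    calc (b * i) • y = b • (i • y) := mul_smul b i y
      _ = b • c := by rw [hi]
      _ = (a * (p : ℤ) + b * j) • w := by
          rw [add_smul, mul_smul, mul_smul, natCast_zsmul, hw, smul_zero, zero_add, hj]
      _ = w := by rw [hab, one_smul]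
  -- main induction: everything killed by a power of p is a multiple of y
  have hmain : ∀ e : ℕ, ∀ z : C, p ^ e • z = 0 → ∃ j : ℤ, j • y = z := by
    intro e
    induction e with
    | zero =>
      intro z hz
      rw [pow_zero, one_smul] at hz
      exact ⟨0, by rw [zero_smul, hz]⟩
    | succ e ih =>
      intro z hz
      have hz' : p ^ e • (p • z) = 0 := by rw [smul_smul, ← pow_succ, hz]
      obtain ⟨k, hk⟩ := ih _ hz'
      by_cases hdvd : (p : ℤ) ∣ k
      · obtain ⟨k', rfl⟩ := hdvd
        have h1 : p • (k' • y) = p • z := by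
          rw [nat_mul_zsmul]; exact hk
        have hw : p • (z - k' • y) = 0 := by
          rw [smul_sub, h1, sub_self]
        obtain ⟨j, hj⟩ := hCp _ hw
        exact ⟨j + k', by rw [add_smul, hj, sub_add_cancel]⟩
      · exfalso
        apply hy
        have hcop : IsCoprime (p : ℤ) k := by
          rw [Int.isCoprime_iff_gcd_eq_one]
          have hgd : Int.gcd (p : ℤ) k ∣ p := by
            have h4 := @Int.gcd_dvd_left (p : ℤ) k
            exact_mod_cast h4
          rcases hpp.eq_one_or_self_of_dvd _ hgd with h1 | h1
          · exact h1
          · exfalso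
            apply hdvd
            have h4 := @Int.gcd_dvd_right (p : ℤ) k
            rwa [h1] at h4
        obtain ⟨a, b, hab⟩ := hcop
        refine mem_nsmulRange.mpr ⟨a • y + b • z, ?_⟩
        calc p • (a • y + b • z)
            = ((p : ℤ) * a) • y + ((p : ℤ) * b) • z := by
              rw [smul_add, nat_mul_zsmul, nat_mul_zsmul]
          _ = (a * (p : ℤ)) • y + b • (k • y) := by
              rw [mul_comm (p : ℤ) a, mul_comm (p : ℤ) b, mul_smul b, hk,
                ← natCast_zsmul z p]
          _ = (a * (p : ℤ) + b * k) • y := by rw [← mul_smul, ← add_smul]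
          _ = y := by rw [hab, one_smul]
  -- conclude: C is generated by y, which has finite order
  have hally : ∀ z : C, ∃ j : ℤ, j • y = z := by
    intro z
    obtain ⟨e, he⟩ := hpow z
    exact hmain e z he
  have hny0 : 0 < addOrderOf y := (hfin y hy0).addOrderOf_pos
  have hsurj : Function.Surjective (fun r : Fin (addOrderOf y) => (r : ℕ) • y) := by
    intro z
    obtain ⟨j, hj⟩ := hally z
    have hne : (addOrderOf y : ℤ) ≠ 0 := by exact_mod_cast hny0.ne'
    have hmod0 : 0 ≤ j % (addOrderOf y : ℤ) := Int.emod_nonneg j hne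
    have hmodlt : j % (addOrderOf y : ℤ) < (addOrderOf y : ℤ) :=
      Int.emod_lt_of_pos j (by exact_mod_cast hny0)
    refine ⟨⟨(j % (addOrderOf y : ℤ)).toNat, by omega⟩, ?_⟩
    show ((j % (addOrderOf y : ℤ)).toNat : ℕ) • y = z
    have h2 : ((addOrderOf y : ℤ)) • y = 0 := by
      rw [natCast_zsmul]; exact addOrderOf_nsmul_eq_zero y
    rw [← natCast_zsmul, Int.toNat_of_nonneg hmod0, ← hj]
    conv_rhs => rw [← Int.emod_add_mul_ediv j (addOrderOf y : ℤ)]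
    rw [add_smul, mul_comm, mul_smul, h2, smul_zero, add_zero]
  exact Finite.of_surjective _ hsurj

lemma exists_finiteIndex_not_mem {Q : Type*} [AddCommGroup Q] (x : Q) (hx : x ≠ 0)
    (hnd : ∀ K : AddSubgroup Q, x ∉ K → ∃ m : ℕ, 0 < m ∧ ∃ z : Q, ∀ v : Q, m • v - z ∉ K) :
    ∃ K : AddSubgroup Q, K.FiniteIndex ∧ x ∉ K := by
  obtain ⟨K, -, hKs, hKmax⟩ :=
    zorn_le_nonempty₀ {K : AddSubgroup Q | x ∉ K} (fun cc hcs hchain y hy => by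
      refine ⟨sSup cc, ?_, fun z hz => le_sSup hz⟩
      intro hxc
      rw [AddSubgroup.mem_sSup_of_directedOn ⟨y, hy⟩ hchain.directedOn] at hxc
      obtain ⟨K, hKc, hxK⟩ := hxc
      exact hcs hKc hxK) ⊥ (by simpa using hx)
  have hxK : x ∉ K := hKs
  have hc : (QuotientAddGroup.mk' K x) ≠ 0 := by
    simpa [QuotientAddGroup.mk'_apply, QuotientAddGroup.eq_zero_iff] using hxK
  have hcog : ∀ N : AddSubgroup (Q ⧸ K), N ≠ ⊥ → QuotientAddGroup.mk' K x ∈ N := by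
    intro N hN
    have hKL : K ≤ N.comap (QuotientAddGroup.mk' K) := by
      intro g hg
      show QuotientAddGroup.mk' K g ∈ N
      have hg0 : QuotientAddGroup.mk' K g = 0 := (QuotientAddGroup.eq_zero_iff g).mpr hg
      rw [hg0]
      exact zero_mem N
    have hxL : x ∈ N.comap (QuotientAddGroup.mk' K) := by
      by_contra hxL
      have hLK : N.comap (QuotientAddGroup.mk' K) = K :=
        le_antisymm (hKmax hxL hKL) hKL
      apply hN
      rw [← AddSubgroup.map_comap_eq_self_of_surjective
        (QuotientAddGroup.mk'_surjective K) N, hLK]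
      rw [eq_bot_iff]
      rintro w hw
      obtain ⟨g, hg, rfl⟩ := hw
      rw [AddSubgroup.mem_bot]
      exact (QuotientAddGroup.eq_zero_iff g).mpr hg
    exact hxL
  obtain ⟨m, hm, z, hz⟩ := hnd K hxK
  have hnd' : nsmulRange (Q ⧸ K) m ≠ ⊤ := by
    intro htop
    have hmem : (QuotientAddGroup.mk' K z) ∈ nsmulRange (Q ⧸ K) m := htop ▸ trivial
    obtain ⟨vb, hv⟩ := mem_nsmulRange.mp hmem
    obtain ⟨v, rfl⟩ := QuotientAddGroup.mk'_surjective K vb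
    apply hz v
    have : QuotientAddGroup.mk' K (m • v - z) = 0 := by
      rw [map_sub, map_nsmul, hv, sub_self]
    exact (QuotientAddGroup.eq_zero_iff _).mp this
  haveI hfin : Finite (Q ⧸ K) := finite_of_cocyclic _ hc hcog hm hnd'
  exact ⟨K, K.finiteIndex_of_finite_quotient, hxK⟩

/-- If no proper quotient of G is divisible, then every quotient of G is residually finite;
in particular G¹ = 0. -/
theorem quotients_residually_finite_of_strongly_nondivisible (G : Type*) [AddCommGroup G]
    (h : ∀ H : AddSubgroup G, H ≠ ⊤ → ¬ (∀ m : ℕ, 0 < m → nsmulRange (G ⧸ H) m = ⊤)) :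
    (∀ H : AddSubgroup G,
      (⨅ N ∈ {N : AddSubgroup (G ⧸ H) | N.FiniteIndex}, N) = ⊥) ∧ ulm G = ⊥ := by
  constructor
  · intro H
    rw [eq_bot_iff]
    intro x hx
    rw [AddSubgroup.mem_bot]
    by_contra hx0
    have hnd : ∀ K : AddSubgroup (G ⧸ H), x ∉ K →
        ∃ m : ℕ, 0 < m ∧ ∃ z : G ⧸ H, ∀ v : G ⧸ H, m • v - z ∉ K := by
      intro K hxK
      have hH' : K.comap (QuotientAddGroup.mk' H) ≠ ⊤ := by
        obtain ⟨g, hg⟩ := QuotientAddGroup.mk'_surjective H x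
        intro htop
        apply hxK
        have hgm : g ∈ K.comap (QuotientAddGroup.mk' H) := htop ▸ trivial
        rwa [AddSubgroup.mem_comap, hg] at hgm
      have hth := h _ hH'
      push_neg at hth
      obtain ⟨m, hm, hmt⟩ := hth
      refine ⟨m, hm, ?_⟩
      obtain ⟨gbar, hgbar⟩ : ∃ gbar : G ⧸ K.comap (QuotientAddGroup.mk' H),
          gbar ∉ nsmulRange _ m := by
        by_contra hall
        push_neg at hall
        exact hmt ((AddSubgroup.eq_top_iff' _).mpr hall)
      obtain ⟨g, rfl⟩ := QuotientAddGroup.mk'_surjective _ gbar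
      refine ⟨QuotientAddGroup.mk' H g, ?_⟩
      intro v hv
      obtain ⟨w, rfl⟩ := QuotientAddGroup.mk'_surjective H v
      apply hgbar
      refine mem_nsmulRange.mpr ⟨QuotientAddGroup.mk' _ w, ?_⟩
      rw [← map_nsmul]
      have hmem : m • w - g ∈ K.comap (QuotientAddGroup.mk' H) := by
        rw [AddSubgroup.mem_comap, map_sub, map_nsmul]
        exact hv
      rw [← sub_eq_zero, ← map_sub]
      exact (QuotientAddGroup.eq_zero_iff _).mpr hmem
    obtain ⟨K, hKfin, hxK⟩ := exists_finiteIndex_not_mem x hx0 hnd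
    simp only [AddSubgroup.mem_iInf, Set.mem_setOf_eq] at hx
    exact hxK (hx K hKfin)
  · rw [eq_bot_iff]
    intro x hx
    rw [AddSubgroup.mem_bot]
    by_contra hx0
    have hx' : ∀ m : ℕ, 0 < m → x ∈ nsmulRange G m := by
      simp only [ulm, AddSubgroup.mem_iInf, Set.mem_Ioi] at hx
      exact hx
    have hnd : ∀ K : AddSubgroup G, x ∉ K →
        ∃ m : ℕ, 0 < m ∧ ∃ z : G, ∀ v : G, m • v - z ∉ K := by
      intro K hxK
      have hK : K ≠ ⊤ := fun ht => hxK (ht ▸ trivial)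
      have hth := h K hK
      push_neg at hth
      obtain ⟨m, hm, hmt⟩ := hth
      refine ⟨m, hm, ?_⟩
      obtain ⟨gbar, hgbar⟩ : ∃ gbar : G ⧸ K, gbar ∉ nsmulRange _ m := by
        by_contra hall
        push_neg at hall
        exact hmt ((AddSubgroup.eq_top_iff' _).mpr hall)
      obtain ⟨g, rfl⟩ := QuotientAddGroup.mk'_surjective _ gbar
      refine ⟨g, ?_⟩
      intro v hv
      apply hgbar
      refine mem_nsmulRange.mpr ⟨QuotientAddGroup.mk' _ v, ?_⟩
      rw [← map_nsmul]
      rw [← sub_eq_zero, ← map_sub]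
      exact (QuotientAddGroup.eq_zero_iff _).mpr hv
    obtain ⟨K, hKfin, hxK⟩ := exists_finiteIndex_not_mem x hx0 hnd
    have hidx : 0 < K.index := Nat.pos_of_ne_zero hKfin.index_ne_zero
    obtain ⟨w, hw⟩ := mem_nsmulRange.mp (hx' K.index hidx)
    exact hxK (hw ▸ K.nsmul_index_mem w)
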